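/- Let F_q be a finite field and G ≤ PGL_2(F_q) a cyclic subgroup of prime order k. Let n > 2 be an integer with k ∤ n. Then every G-orbit of monic irreducible degree-n polynomials over F_q has size exactly k, and consequently ω_G(n,k) = N_q(n)/k, where N_q(n) is the number of monic irreducible polynomials of degree n over F_q. -/

import Mathlib

open Polynomial

/-- `PGL₂(F)`: the quotient of `GL₂(F)` by its center. -/
abbrev PGL2 (F : Type*) [Field F] :=
  GL (Fin 2) F ⧸ Subgroup.center (GL (Fin 2) F)

/-- The class of `A ∈ GL₂(F)` in `PGL₂(F)`. -/
abbrev PGL2.mk {F : Type*} [Field F] (A : GL (Fin 2) F) : PGL2 F :=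
  QuotientGroup.mk A

/-- The Möbius function `(ax + b)/(cx + d)` associated to `A ∈ GL₂(F)`, as a
rational function over `F`. -/
noncomputable def mobiusRatFunc {F : Type*} [Field F] (A : GL (Fin 2) F) : RatFunc F :=
  (RatFunc.C (A.val 0 0) * RatFunc.X + RatFunc.C (A.val 0 1)) /
    (RatFunc.C (A.val 1 0) * RatFunc.X + RatFunc.C (A.val 1 1))

/-- The rational transform `f^Q = Σ_{i=0}^{deg f} f_i g^i h^{deg f - i}` of a monic
polynomial `f` with the rational function `Q = g/h`. -/
noncomputable def ratTransform {F : Type*} [Field F] (g h f : F[X]) : F[X] :=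
  ∑ i ∈ Finset.range (f.natDegree + 1), C (f.coeff i) * g ^ i * h ^ (f.natDegree - i)

/-- `Q = g/h` is a quotient map for the subgroup `G ≤ PGL₂(F)`: `g, h` are coprime,
`g` is monic of degree `|G|`, `0 ≤ deg h < deg g`, and `Q` is `G`-invariant, i.e.
`Q ∘ ([A] ∘ x) = Q` for all `[A] ∈ G` (equivalently, `F(Q) = F(x)^G`). -/
def IsQuotientMap {F : Type*} [Field F] (G : Subgroup (PGL2 F)) (g h : F[X]) : Prop :=
  g.Monic ∧ IsCoprime g h ∧ h ≠ 0 ∧ h.natDegree < g.natDegree ∧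
    g.natDegree = Nat.card G ∧
    ∀ A : GL (Fin 2) F, PGL2.mk A ∈ G →
      Polynomial.aeval (mobiusRatFunc A) g / Polynomial.aeval (mobiusRatFunc A) h
        = algebraMap F[X] (RatFunc F) g / algebraMap F[X] (RatFunc F) h

/-- `d(Q)` for `Q = g/h`: the largest degree of a monic irreducible polynomial `f`
such that `f^Q` is not squarefree (`0` if no such polynomial exists). -/
noncomputable def dval {F : Type*} [Field F] (g h : F[X]) : ℕ :=
  sSup {n : ℕ | ∃ f : F[X], f.Monic ∧ Irreducible f ∧ f.natDegree = n ∧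
    ¬ Squarefree (ratTransform g h f)}

/-- The (non-normalized) Möbius substitution
`Σ_{i=0}^{deg f} f_i (ax+b)^i (cx+d)^{deg f - i}` of `f` by `A ∈ GL₂(F)`. -/
noncomputable def mobiusSubst {F : Type*} [Field F] (A : GL (Fin 2) F) (f : F[X]) : F[X] :=
  ∑ i ∈ Finset.range (f.natDegree + 1),
    C (f.coeff i) * (C (A.val 0 0) * X + C (A.val 0 1)) ^ i *
      (C (A.val 1 0) * X + C (A.val 1 1)) ^ (f.natDegree - i)

/-- `[A] ∗ f`: the unique monic scalar multiple of the Möbius substitution of `f`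
by `A`. -/
noncomputable def mobiusStar {F : Type*} [Field F] (A : GL (Fin 2) F) (f : F[X]) : F[X] :=
  C ((mobiusSubst A f).leadingCoeff)⁻¹ * mobiusSubst A f

/-- `f ∈ NR_q^G`: `f` is monic and has no root in the `G`-orbit of `∞` under the
Möbius action (the orbit point `[A] ∘ ∞` is `a/c` when `c ≠ 0`, and `∞` — which is
never a root of a monic polynomial — when `c = 0`). -/
def memNR {F : Type*} [Field F] (G : Subgroup (PGL2 F)) (f : F[X]) : Prop :=
  f.Monic ∧ ∀ A : GL (Fin 2) F, PGL2.mk A ∈ G → A.val 1 0 ≠ 0 →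
    f.eval (A.val 0 0 / A.val 1 0) ≠ 0

/-- `G ∗ r`: the `G`-orbit of the polynomial `r` under the `∗` action. -/
def polyOrbit {F : Type*} [Field F] (G : Subgroup (PGL2 F)) (r : F[X]) : Set F[X] :=
  {t : F[X] | ∃ A : GL (Fin 2) F, PGL2.mk A ∈ G ∧ t = mobiusStar A r}

/-- `ω_G(n, k)`: the number of `G`-orbits of size `k` of monic irreducible
polynomials of degree `n` in `NR_q^G`. -/
noncomputable def omegaG {F : Type*} [Field F] (G : Subgroup (PGL2 F)) (n k : ℕ) : ℕ :=
  {O : Set F[X] | ∃ r : F[X], memNR G r ∧ Irreducible r ∧ r.natDegree = n ∧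
    O = polyOrbit G r ∧ O.ncard = k}.ncard

section Lemmas
variable {F : Type*} [Field F]

lemma coeff_linear_pow (u v : F) (i : ℕ) : ((C u * X + C v) ^ i).coeff i = u ^ i := by
  have h := Polynomial.coeff_pow_of_natDegree_le (p := C u * X + C v) (n := 1) (m := i)
    natDegree_linear_le
  simpa using h

lemma natDegree_linear_pow_le (u v : F) (i : ℕ) : ((C u * X + C v) ^ i).natDegree ≤ i :=
  natDegree_pow_le.trans (by simpa using Nat.mul_le_mul_left i (natDegree_linear_le (a := u) (b := v)))

lemma mobiusSubst_coeff_natDegree (A : GL (Fin 2) F) (f : F[X]) :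
    (mobiusSubst A f).coeff f.natDegree
      = ∑ i ∈ Finset.range (f.natDegree + 1),
          f.coeff i * (A.val 0 0) ^ i * (A.val 1 0) ^ (f.natDegree - i) := by
  unfold mobiusSubst
  rw [finset_sum_coeff]
  refine Finset.sum_congr rfl fun i hi => ?_
  have hi' : i ≤ f.natDegree := Nat.lt_succ_iff.mp (Finset.mem_range.mp hi)
  have h := coeff_mul_add_eq_of_natDegree_le (natDegree_linear_pow_le (A.val 0 0) (A.val 0 1) i)
    (natDegree_linear_pow_le (A.val 1 0) (A.val 1 1) (f.natDegree - i))
  rw [show i + (f.natDegree - i) = f.natDegree by omega] at h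
  rw [mul_assoc, coeff_C_mul, h, coeff_linear_pow, coeff_linear_pow, mul_assoc]

lemma natDegree_mobiusSubst_le (A : GL (Fin 2) F) (f : F[X]) :
    (mobiusSubst A f).natDegree ≤ f.natDegree := by
  refine natDegree_sum_le_of_forall_le _ _ fun i hi => ?_
  have hi' : i ≤ f.natDegree := Nat.lt_succ_iff.mp (Finset.mem_range.mp hi)
  have b1 : (C (f.coeff i) * (C (A.val 0 0) * X + C (A.val 0 1)) ^ i).natDegree ≤ i :=
    natDegree_mul_le.trans (by simpa [natDegree_C] using natDegree_linear_pow_le (A.val 0 0) (A.val 0 1) i)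
  have b2 := natDegree_linear_pow_le (A.val 1 0) (A.val 1 1) (f.natDegree - i)
  exact natDegree_mul_le.trans (by omega)

end Lemmas
section Eval
variable {F : Type*} [Field F]

lemma GL2.det_ne (A : GL (Fin 2) F) :
    A.val 0 0 * A.val 1 1 - A.val 0 1 * A.val 1 0 ≠ 0 := by
  have h : IsUnit (A.val).det := (Matrix.isUnit_iff_isUnit_det _).mp A.isUnit
  rw [Matrix.det_fin_two] at h
  exact h.ne_zero

lemma no_root_of_irreducible {f : F[X]} (hf : Irreducible f) (hdeg : 2 ≤ f.natDegree) (x : F) :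
    f.eval x ≠ 0 := by
  intro h
  obtain ⟨g, hg⟩ := dvd_iff_isRoot.mpr h
  rcases hf.isUnit_or_isUnit hg with h1 | h1
  · exact (Polynomial.not_isUnit_of_natDegree_pos _ (by simp)) h1
  · have hgne : g ≠ 0 := fun h0 => by simp [h0] at hg; exact hf.ne_zero hg
    have : f.natDegree = 1 := by
      rw [hg, natDegree_mul (X_sub_C_ne_zero x) hgne, natDegree_eq_zero_of_isUnit h1]
      simp
    omega

lemma mobiusSubst_coeff_ne_zero {f : F[X]} (hm : f.Monic) (hf : Irreducible f)
    (hdeg : 2 ≤ f.natDegree) (A : GL (Fin 2) F) :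
    (mobiusSubst A f).coeff f.natDegree ≠ 0 := by
  rw [mobiusSubst_coeff_natDegree]
  by_cases hc : A.val 1 0 = 0
  · have ha : A.val 0 0 ≠ 0 := by
      have := GL2.det_ne A; intro h0; rw [hc, h0] at this; simp at this
    rw [Finset.sum_eq_single f.natDegree]
    · simpa [hm.coeff_natDegree] using pow_ne_zero f.natDegree ha
    · intro i hi hne
      have hi' : i < f.natDegree := by
        have := Nat.lt_succ_iff.mp (Finset.mem_range.mp hi); omega
      simp [hc, zero_pow (show f.natDegree - i ≠ 0 by omega)]
    · intro h; exact absurd (Finset.self_mem_range_succ _) h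
  · have key : ∑ i ∈ Finset.range (f.natDegree + 1),
        f.coeff i * (A.val 0 0) ^ i * (A.val 1 0) ^ (f.natDegree - i)
        = A.val 1 0 ^ f.natDegree * f.eval (A.val 0 0 / A.val 1 0) := by
      rw [eval_eq_sum_range, Finset.mul_sum]
      refine Finset.sum_congr rfl fun i hi => ?_
      have hi' : i ≤ f.natDegree := Nat.lt_succ_iff.mp (Finset.mem_range.mp hi)
      rw [pow_sub₀ _ hc hi', div_pow]
      field_simp
    rw [key]
    exact mul_ne_zero (pow_ne_zero _ hc) (no_root_of_irreducible hf hdeg _)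

lemma natDegree_mobiusSubst {f : F[X]} (hm : f.Monic) (hf : Irreducible f)
    (hdeg : 2 ≤ f.natDegree) (A : GL (Fin 2) F) :
    (mobiusSubst A f).natDegree = f.natDegree :=
  le_antisymm (natDegree_mobiusSubst_le A f)
    (le_natDegree_of_ne_zero (mobiusSubst_coeff_ne_zero hm hf hdeg A))

lemma mobiusSubst_ne_zero {f : F[X]} (hm : f.Monic) (hf : Irreducible f)
    (hdeg : 2 ≤ f.natDegree) (A : GL (Fin 2) F) : mobiusSubst A f ≠ 0 := fun h0 => by
  have := mobiusSubst_coeff_ne_zero hm hf hdeg A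
  rw [h0] at this; simp at this

lemma mobiusStar_monic {f : F[X]} (hm : f.Monic) (hf : Irreducible f)
    (hdeg : 2 ≤ f.natDegree) (A : GL (Fin 2) F) : (mobiusStar A f).Monic := by
  have hne := mobiusSubst_ne_zero hm hf hdeg A
  have hlc : (mobiusSubst A f).leadingCoeff ≠ 0 := leadingCoeff_ne_zero.mpr hne
  unfold mobiusStar Monic
  rw [leadingCoeff_mul, leadingCoeff_C, inv_mul_cancel₀ hlc]

lemma natDegree_mobiusStar {f : F[X]} (hm : f.Monic) (hf : Irreducible f)
    (hdeg : 2 ≤ f.natDegree) (A : GL (Fin 2) F) :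
    (mobiusStar A f).natDegree = f.natDegree := by
  have hne := mobiusSubst_ne_zero hm hf hdeg A
  have hlc : (mobiusSubst A f).leadingCoeff ≠ 0 := leadingCoeff_ne_zero.mpr hne
  unfold mobiusStar
  rw [natDegree_C_mul (inv_ne_zero hlc), natDegree_mobiusSubst hm hf hdeg]

end Eval
section EvalK
variable {F : Type*} [Field F] {K : Type*} [Field K] [Algebra F K]

lemma aeval_mobiusSubst (A : GL (Fin 2) F) (f : F[X]) (γ : K) :
    aeval γ (mobiusSubst A f) = ∑ i ∈ Finset.range (f.natDegree + 1),
      algebraMap F K (f.coeff i)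
        * (algebraMap F K (A.val 0 0) * γ + algebraMap F K (A.val 0 1)) ^ i
        * (algebraMap F K (A.val 1 0) * γ + algebraMap F K (A.val 1 1)) ^ (f.natDegree - i) := by
  simp [mobiusSubst, map_sum]

lemma aeval_mobiusSubst_eq (A : GL (Fin 2) F) (f : F[X]) (γ : K)
    (hden : algebraMap F K (A.val 1 0) * γ + algebraMap F K (A.val 1 1) ≠ 0) :
    aeval γ (mobiusSubst A f)
      = (algebraMap F K (A.val 1 0) * γ + algebraMap F K (A.val 1 1)) ^ f.natDegree
        * aeval ((algebraMap F K (A.val 0 0) * γ + algebraMap F K (A.val 0 1)) /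
            (algebraMap F K (A.val 1 0) * γ + algebraMap F K (A.val 1 1))) f := by
  rw [aeval_mobiusSubst, aeval_eq_sum_range, Finset.mul_sum]
  refine Finset.sum_congr rfl fun i hi => ?_
  have hi' : i ≤ f.natDegree := Nat.lt_succ_iff.mp (Finset.mem_range.mp hi)
  rw [Algebra.smul_def, div_pow, pow_sub₀ _ hden hi']
  field_simp

lemma aeval_mobiusStar_eq_zero_iff {A : GL (Fin 2) F} {f : F[X]}
    (hne : mobiusSubst A f ≠ 0) (γ : K) :
    aeval γ (mobiusStar A f) = 0 ↔ aeval γ (mobiusSubst A f) = 0 := by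
  have hlc : (mobiusSubst A f).leadingCoeff ≠ 0 := leadingCoeff_ne_zero.mpr hne
  have : (algebraMap F K) (mobiusSubst A f).leadingCoeff⁻¹ ≠ 0 := by
    simpa using inv_ne_zero hlc
  unfold mobiusStar
  rw [map_mul, aeval_C, mul_eq_zero]
  exact or_iff_right this

lemma root_not_pole {f : F[X]} (hf : Irreducible f) (hdeg : 2 ≤ f.natDegree) {γ : K}
    (hγ : aeval γ f = 0) {c d : F} (hcd : ¬(c = 0 ∧ d = 0)) :
    algebraMap F K c * γ + algebraMap F K d ≠ 0 := by
  intro h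
  by_cases hc : c = 0
  · have hd : d ≠ 0 := fun h0 => hcd ⟨hc, h0⟩
    rw [hc] at h
    simp [_root_.map_eq_zero] at h
    exact hd h
  · have hcK : algebraMap F K c ≠ 0 := by simpa using hc
    have hγeq : γ = algebraMap F K (-d / c) := by
      rw [map_div₀, map_neg, eq_div_iff hcK]
      linear_combination h
    rw [hγeq, aeval_algebraMap_apply] at hγ
    simp only [_root_.map_eq_zero] at hγ
    exact no_root_of_irreducible hf hdeg _ (by simpa using hγ)

lemma GL2.row1_ne (A : GL (Fin 2) F) : ¬(A.val 1 0 = 0 ∧ A.val 1 1 = 0) := by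
  rintro ⟨h1, h2⟩
  have := GL2.det_ne A
  rw [h1, h2] at this
  simp at this

lemma GL2.row0_ne (A : GL (Fin 2) F) : ¬(A.val 0 0 = 0 ∧ A.val 0 1 = 0) := by
  rintro ⟨h1, h2⟩
  have := GL2.det_ne A
  rw [h1, h2] at this
  simp at this

lemma eval_mobiusSubst (A : GL (Fin 2) F) (f : F[X]) (x : F) :
    eval x (mobiusSubst A f) = ∑ i ∈ Finset.range (f.natDegree + 1),
      f.coeff i * (A.val 0 0 * x + A.val 0 1) ^ i
        * (A.val 1 0 * x + A.val 1 1) ^ (f.natDegree - i) := by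
  simp [mobiusSubst, eval_finset_sum]

lemma subst_root_not_pole {f : F[X]} (hm : f.Monic) (hf : Irreducible f)
    (hdeg : 2 ≤ f.natDegree) (A : GL (Fin 2) F) {γ : K}
    (hγ : aeval γ (mobiusSubst A f) = 0) :
    algebraMap F K (A.val 1 0) * γ + algebraMap F K (A.val 1 1) ≠ 0 := by
  intro h
  by_cases hc : A.val 1 0 = 0
  · have hd : A.val 1 1 ≠ 0 := fun h0 => GL2.row1_ne A ⟨hc, h0⟩
    rw [hc] at h
    simp [_root_.map_eq_zero] at h
    exact hd h
  · have hcK : algebraMap F K (A.val 1 0) ≠ 0 := by simpa using hc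
    have hγeq : γ = algebraMap F K (-(A.val 1 1) / A.val 1 0) := by
      rw [map_div₀, map_neg, eq_div_iff hcK]
      linear_combination h
    rw [hγeq, aeval_algebraMap_apply] at hγ
    simp only [_root_.map_eq_zero] at hγ
    have heval : eval (-(A.val 1 1) / A.val 1 0) (mobiusSubst A f) ≠ 0 := by
      rw [eval_mobiusSubst]
      have hzero : A.val 1 0 * (-(A.val 1 1) / A.val 1 0) + A.val 1 1 = 0 := by
        field_simp
        ring
      rw [Finset.sum_eq_single f.natDegree]
      · rw [hzero, hm.coeff_natDegree, Nat.sub_self, pow_zero, one_mul, mul_one]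
        apply pow_ne_zero
        intro h0
        apply GL2.det_ne A
        field_simp at h0
        linear_combination -h0
      · intro i hi hne
        have hi' : i < f.natDegree := by
          have := Nat.lt_succ_iff.mp (Finset.mem_range.mp hi); omega
        rw [hzero, zero_pow (show f.natDegree - i ≠ 0 by omega), mul_zero]
      · intro hmem; exact absurd (Finset.self_mem_range_succ _) hmem
    exact heval (by simpa using hγ)

end EvalK
section Irred
open IntermediateField
variable {F : Type*} [Field F]

lemma mobiusStar_irreducible {f : F[X]} (hm : f.Monic) (hf : Irreducible f)
    (hdeg : 2 ≤ f.natDegree) (A : GL (Fin 2) F) : Irreducible (mobiusStar A f) := by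
  classical
  set K := AlgebraicClosure F
  set t := mobiusStar A f with ht
  have hne := mobiusSubst_ne_zero hm hf hdeg A
  have htm : t.Monic := mobiusStar_monic hm hf hdeg A
  have htdeg : t.natDegree = f.natDegree := natDegree_mobiusStar hm hf hdeg A
  have htne : t ≠ 0 := htm.ne_zero
  -- a root of t in K
  have hdegne : (t.map (algebraMap F K)).degree ≠ 0 := by
    rw [degree_map, degree_eq_natDegree htne]
    intro h0
    have : t.natDegree = 0 := by exact_mod_cast h0
    omega
  obtain ⟨γ, hγroot⟩ := IsAlgClosed.exists_root (t.map (algebraMap F K)) hdegne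
  have hγ : aeval γ t = 0 := by rwa [aeval_def, ← eval_map]
  have hsub : aeval γ (mobiusSubst A f) = 0 := (aeval_mobiusStar_eq_zero_iff hne γ).mp hγ
  have hden := subst_root_not_pole hm hf hdeg A hsub
  set β : K := (algebraMap F K (A.val 0 0) * γ + algebraMap F K (A.val 0 1)) /
      (algebraMap F K (A.val 1 0) * γ + algebraMap F K (A.val 1 1)) with hβ
  have hβroot : aeval β f = 0 := by
    have := aeval_mobiusSubst_eq A f γ hden
    rw [hsub] at this
    exact ((mul_eq_zero.mp this.symm).resolve_left (pow_ne_zero _ hden))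
  have hγint : IsIntegral F γ := Algebra.IsIntegral.isIntegral γ
  haveI : FiniteDimensional F F⟮γ⟯ := IntermediateField.adjoin.finiteDimensional hγint
  have hβmem : β ∈ F⟮γ⟯ := by
    have hγmem : γ ∈ F⟮γ⟯ := IntermediateField.mem_adjoin_simple_self F γ
    exact div_mem
      (add_mem (mul_mem (F⟮γ⟯.algebraMap_mem _) hγmem) (F⟮γ⟯.algebraMap_mem _))
      (add_mem (mul_mem (F⟮γ⟯.algebraMap_mem _) hγmem) (F⟮γ⟯.algebraMap_mem _))
  have hminβ : f = minpoly F β := minpoly.eq_of_irreducible_of_monic hf hβroot hm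
  have h1 : f.natDegree ≤ (minpoly F γ).natDegree := by
    have h2 : minpoly F (⟨β, hβmem⟩ : F⟮γ⟯) = minpoly F β := by
      have h3 := minpoly.algebraMap_eq (A := F) (B := F⟮γ⟯) (B' := K)
        (algebraMap F⟮γ⟯ K).injective ⟨β, hβmem⟩
      simpa using h3.symm
    calc f.natDegree = (minpoly F (⟨β, hβmem⟩ : F⟮γ⟯)).natDegree := by
          rw [h2, ← hminβ]
      _ ≤ Module.finrank F F⟮γ⟯ := minpoly.natDegree_le _
      _ = (minpoly F γ).natDegree := IntermediateField.adjoin.finrank hγint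
  have hdvd : minpoly F γ ∣ t := minpoly.dvd F γ hγ
  have h2 : (minpoly F γ).natDegree = t.natDegree :=
    le_antisymm (natDegree_le_of_dvd hdvd htne) (htdeg ▸ h1)
  have hqm : (minpoly F γ).Monic := minpoly.monic hγint
  obtain ⟨u, hu⟩ := hdvd
  have hune : u ≠ 0 := by rintro rfl; rw [mul_zero] at hu; exact htne hu
  have hudeg : u.natDegree = 0 := by
    have := natDegree_mul hqm.ne_zero hune
    rw [← hu, h2] at this
    omega
  have hum : u.Monic := by
    have := htm
    rw [hu] at this
    exact hqm.of_mul_monic_left this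
  have hu1 : u = 1 := hum.natDegree_eq_zero.mp hudeg
  rw [hu, hu1, mul_one]
  exact minpoly.irreducible hγint

end Irred
section Comp
variable {F : Type*} [Field F]

lemma normalize_C_mul {w : F} (hw : w ≠ 0) (p : F[X]) :
    C ((C w * p).leadingCoeff)⁻¹ * (C w * p) = C (p.leadingCoeff)⁻¹ * p := by
  rcases eq_or_ne p 0 with rfl | hp
  · simp
  · rw [leadingCoeff_mul, leadingCoeff_C, ← mul_assoc, ← C_mul, mul_inv_rev,
      mul_assoc, inv_mul_cancel₀ hw, mul_one]

lemma mobiusSubst_C_mul (A : GL (Fin 2) F) {w : F} (hw : w ≠ 0) (p : F[X]) :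
    mobiusSubst A (C w * p) = C w * mobiusSubst A p := by
  unfold mobiusSubst
  rw [natDegree_C_mul hw, Finset.mul_sum]
  refine Finset.sum_congr rfl fun i _ => ?_
  rw [coeff_C_mul, C_mul]
  ring

lemma mobiusStar_C_mul (A : GL (Fin 2) F) {w : F} (hw : w ≠ 0) (p : F[X]) :
    mobiusStar A (C w * p) = mobiusStar A p := by
  unfold mobiusStar
  rw [mobiusSubst_C_mul A hw p, normalize_C_mul hw]

lemma mobiusSubst_one (f : F[X]) : mobiusSubst 1 f = f := by
  have h00 : ((1 : GL (Fin 2) F).val 0 0) = 1 := Matrix.one_apply_eq 0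
  have h01 : ((1 : GL (Fin 2) F).val 0 1) = 0 := Matrix.one_apply_ne (by decide)
  have h10 : ((1 : GL (Fin 2) F).val 1 0) = 0 := Matrix.one_apply_ne (by decide)
  have h11 : ((1 : GL (Fin 2) F).val 1 1) = 1 := Matrix.one_apply_eq 1
  unfold mobiusSubst
  rw [h00, h01, h10, h11]
  conv_rhs => rw [f.as_sum_range' (f.natDegree + 1) (lt_add_one _)]
  refine Finset.sum_congr rfl fun i _ => ?_
  simp [← C_mul_X_pow_eq_monomial]

lemma mobiusStar_one {f : F[X]} (hm : f.Monic) : mobiusStar 1 f = f := by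
  unfold mobiusStar
  rw [mobiusSubst_one, hm.leadingCoeff]
  simp

lemma pole_set_finite {K : Type*} [Field K] [Algebra F K] {c d : F} (h : ¬(c = 0 ∧ d = 0)) :
    {x : K | algebraMap F K c * x + algebraMap F K d = 0}.Finite := by
  by_cases hc : c = 0
  · have hd : d ≠ 0 := fun h0 => h ⟨hc, h0⟩
    convert Set.finite_empty
    ext x
    simp only [Set.mem_setOf_eq, Set.mem_empty_iff_false, iff_false]
    rw [hc]
    simp [_root_.map_eq_zero, hd]
  · have hcK : algebraMap F K c ≠ 0 := by simpa using hc
    apply Set.Finite.subset (Set.finite_singleton (-(algebraMap F K d) / algebraMap F K c))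
    intro x hx
    simp only [Set.mem_setOf_eq] at hx
    simp only [Set.mem_singleton_iff]
    field_simp
    linear_combination hx

lemma mobiusSubst_comp (A B : GL (Fin 2) F) {f : F[X]}
    (hdeg : (mobiusSubst A f).natDegree = f.natDegree) :
    mobiusSubst B (mobiusSubst A f) = mobiusSubst (A * B) f := by
  classical
  set K := AlgebraicClosure F
  set φ := algebraMap F K with hφ
  have hinj : Function.Injective (Polynomial.map φ) :=
    Polynomial.map_injective φ (algebraMap F K).injective
  apply hinj
  apply Polynomial.eq_of_infinite_eval_eq
  have hbad : ({x : K | φ (B.val 1 0) * x + φ (B.val 1 1) = 0} ∪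
      {x : K | φ ((A * B).val 1 0) * x + φ ((A * B).val 1 1) = 0}).Finite :=
    (pole_set_finite (GL2.row1_ne B)).union (pole_set_finite (GL2.row1_ne (A * B)))
  refine Set.Infinite.mono ?_ hbad.infinite_compl
  intro x hx
  simp only [Set.compl_union, Set.mem_inter_iff, Set.mem_compl_iff, Set.mem_setOf_eq] at hx
  obtain ⟨h2, h3⟩ := hx
  set num₂ : K := φ (B.val 0 0) * x + φ (B.val 0 1) with hnum2
  set den₂ : K := φ (B.val 1 0) * x + φ (B.val 1 1) with hden2
  set δ : K := num₂ / den₂ with hδ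
  have hAB : (A * B).val = A.val * B.val := rfl
  have e00 : (A * B).val 0 0 = A.val 0 0 * B.val 0 0 + A.val 0 1 * B.val 1 0 := by
    rw [hAB, Matrix.mul_apply, Fin.sum_univ_two]
  have e01 : (A * B).val 0 1 = A.val 0 0 * B.val 0 1 + A.val 0 1 * B.val 1 1 := by
    rw [hAB, Matrix.mul_apply, Fin.sum_univ_two]
  have e10 : (A * B).val 1 0 = A.val 1 0 * B.val 0 0 + A.val 1 1 * B.val 1 0 := by
    rw [hAB, Matrix.mul_apply, Fin.sum_univ_two]
  have e11 : (A * B).val 1 1 = A.val 1 0 * B.val 0 1 + A.val 1 1 * B.val 1 1 := by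
    rw [hAB, Matrix.mul_apply, Fin.sum_univ_two]
  have hkey : (φ (A.val 1 0) * δ + φ (A.val 1 1)) * den₂
      = φ ((A * B).val 1 0) * x + φ ((A * B).val 1 1) := by
    rw [e10, e11, hδ, hnum2, hden2, map_add, map_add, map_mul, map_mul, map_mul, map_mul]
    have h2' : φ (B.val 1 0) * x + φ (B.val 1 1) ≠ 0 := h2
    rw [mul_div_assoc', div_add' _ _ _ h2', div_mul_cancel₀ _ h2']
    ring
  have hnum : (φ (A.val 0 0) * δ + φ (A.val 0 1)) * den₂
      = φ ((A * B).val 0 0) * x + φ ((A * B).val 0 1) := by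
    rw [e00, e01, hδ, hnum2, hden2, map_add, map_add, map_mul, map_mul, map_mul, map_mul]
    have h2' : φ (B.val 1 0) * x + φ (B.val 1 1) ≠ 0 := h2
    rw [mul_div_assoc', div_add' _ _ _ h2', div_mul_cancel₀ _ h2']
    ring
  have hinner : φ (A.val 1 0) * δ + φ (A.val 1 1) ≠ 0 := by
    intro h0
    exact h3 (by rw [← hkey, h0, zero_mul])
  show eval x ((mobiusSubst B (mobiusSubst A f)).map φ) = eval x ((mobiusSubst (A * B) f).map φ)
  rw [eval_map, eval_map, ← aeval_def, ← aeval_def]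
  rw [aeval_mobiusSubst_eq B (mobiusSubst A f) x h2, hdeg,
    aeval_mobiusSubst_eq A f δ hinner, aeval_mobiusSubst_eq (A * B) f x h3]
  have hMδ : (φ (A.val 0 0) * δ + φ (A.val 0 1)) / (φ (A.val 1 0) * δ + φ (A.val 1 1))
      = (φ ((A * B).val 0 0) * x + φ ((A * B).val 0 1)) /
        (φ ((A * B).val 1 0) * x + φ ((A * B).val 1 1)) := by
    rw [div_eq_div_iff hinner h3]
    have hcross : ((φ (A.val 0 0) * δ + φ (A.val 0 1)) *
          (φ ((A * B).val 1 0) * x + φ ((A * B).val 1 1))) * den₂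
        = ((φ ((A * B).val 0 0) * x + φ ((A * B).val 0 1)) *
          (φ (A.val 1 0) * δ + φ (A.val 1 1))) * den₂ := by
      linear_combination (φ ((A * B).val 1 0) * x + φ ((A * B).val 1 1)) * hnum
        - (φ ((A * B).val 0 0) * x + φ ((A * B).val 0 1)) * hkey
    exact mul_right_cancel₀ h2 hcross
  rw [hMδ, ← mul_assoc, ← mul_pow]
  congr 2
  rw [← hkey]
  ring

lemma mobiusStar_comp (A B : GL (Fin 2) F) {f : F[X]} (hm : f.Monic) (hf : Irreducible f)
    (hdeg : 2 ≤ f.natDegree) :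
    mobiusStar B (mobiusStar A f) = mobiusStar (A * B) f := by
  have hne := mobiusSubst_ne_zero hm hf hdeg A
  have hlc : (mobiusSubst A f).leadingCoeff ≠ 0 := leadingCoeff_ne_zero.mpr hne
  calc mobiusStar B (mobiusStar A f)
      = mobiusStar B (mobiusSubst A f) := mobiusStar_C_mul B (inv_ne_zero hlc) _
    _ = mobiusStar (A * B) f := by
        unfold mobiusStar
        rw [mobiusSubst_comp A B (natDegree_mobiusSubst hm hf hdeg A)]

end Comp
section Center
variable {F : Type*} [Field F]

noncomputable def transvUnit (i j : Fin 2) (hij : i ≠ j) : GL (Fin 2) F where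
  val := Matrix.transvection i j 1
  inv := Matrix.transvection i j (-1)
  val_inv := by rw [Matrix.transvection_mul_transvection_same i j hij]; simp
  inv_val := by rw [Matrix.transvection_mul_transvection_same i j hij]; simp

lemma smul_one_eq_diagonal (z : F) :
    z • (1 : Matrix (Fin 2) (Fin 2) F) = Matrix.diagonal (fun _ => z) := by
  ext i j
  by_cases h : i = j <;>
    simp [Matrix.one_apply, Matrix.diagonal_apply, h]

lemma mem_center_GL2_iff {S : GL (Fin 2) F} :
    S ∈ Subgroup.center (GL (Fin 2) F) ↔
      ∃ z : F, S.val = z • (1 : Matrix (Fin 2) (Fin 2) F) := by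
  constructor
  · intro h
    have hcomm : Pairwise fun i j : Fin 2 =>
        Commute (Matrix.single i j (1 : F)) S.val := by
      intro i j hij
      have h1 := (Subgroup.mem_center_iff.mp h) (transvUnit i j hij)
      have h2 : Matrix.transvection i j (1 : F) * S.val
          = S.val * Matrix.transvection i j 1 := by
        have h3 := congrArg Units.val h1
        simpa [transvUnit, Units.val_mul] using h3
      simp only [Matrix.transvection, Matrix.add_mul, Matrix.mul_add,
        Matrix.one_mul, Matrix.mul_one] at h2
      have h4 := add_left_cancel ((add_comm _ _).trans (h2.trans (add_comm _ _)).symm)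
      exact h4.symm
    obtain ⟨z, hz⟩ := Matrix.mem_range_scalar_of_commute_single hcomm
    refine ⟨z, ?_⟩
    rw [smul_one_eq_diagonal, ← hz, Matrix.scalar_apply]
  · rintro ⟨z, hz⟩
    rw [Subgroup.mem_center_iff]
    intro g
    refine Units.ext ?_
    rw [Units.val_mul, Units.val_mul, hz]
    rw [Matrix.mul_smul, Matrix.smul_mul, Matrix.mul_one, Matrix.one_mul]

lemma central_scalar_ne_zero {S : GL (Fin 2) F} {z : F}
    (hz : S.val = z • (1 : Matrix (Fin 2) (Fin 2) F)) : z ≠ 0 := by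
  intro h0
  have h : IsUnit (S.val).det := (Matrix.isUnit_iff_isUnit_det _).mp S.isUnit
  rw [hz, h0] at h
  simp at h

lemma mobiusSubst_mul_central (A S : GL (Fin 2) F) {z : F}
    (hS : S.val = z • (1 : Matrix (Fin 2) (Fin 2) F)) (f : F[X]) :
    mobiusSubst (A * S) f = C (z ^ f.natDegree) * mobiusSubst A f := by
  have hAS : (A * S).val = A.val * S.val := rfl
  have he : ∀ i j, (A * S).val i j = z * A.val i j := by
    intro i j
    rw [hAS, hS]
    simp [Matrix.mul_smul]
  unfold mobiusSubst
  rw [Finset.mul_sum]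
  refine Finset.sum_congr rfl fun i hi => ?_
  have hi' : i ≤ f.natDegree := Nat.lt_succ_iff.mp (Finset.mem_range.mp hi)
  rw [he 0 0, he 0 1, he 1 0, he 1 1]
  have l1 : C (z * A.val 0 0) * X + C (z * A.val 0 1)
      = C z * (C (A.val 0 0) * X + C (A.val 0 1)) := by
    rw [C_mul, C_mul]; ring
  have l2 : C (z * A.val 1 0) * X + C (z * A.val 1 1)
      = C z * (C (A.val 1 0) * X + C (A.val 1 1)) := by
    rw [C_mul, C_mul]; ring
  rw [l1, l2, mul_pow, mul_pow,
    show C (z ^ f.natDegree) = C z ^ i * C z ^ (f.natDegree - i) by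
      rw [← pow_add, show i + (f.natDegree - i) = f.natDegree by omega, C_pow]]
  ring

lemma mobiusStar_eq_of_mk_eq {A B : GL (Fin 2) F} (h : PGL2.mk A = PGL2.mk B) (f : F[X]) :
    mobiusStar A f = mobiusStar B f := by
  have hmem : A⁻¹ * B ∈ Subgroup.center (GL (Fin 2) F) := QuotientGroup.eq.mp h
  obtain ⟨z, hz⟩ := mem_center_GL2_iff.mp hmem
  have hzne : z ≠ 0 := central_scalar_ne_zero hz
  have hB : B = A * (A⁻¹ * B) := by group
  rw [hB]
  unfold mobiusStar
  rw [mobiusSubst_mul_central A _ hz f,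
    normalize_C_mul (pow_ne_zero _ hzne) (mobiusSubst A f)]

end Center
section MobiusPt
variable {F : Type*} [Field F] {K : Type*} [Field K] [Algebra F K]

/-- Pointwise Möbius action. -/
noncomputable def mobiusPt (A : GL (Fin 2) F) (γ : K) : K :=
  (algebraMap F K (A.val 0 0) * γ + algebraMap F K (A.val 0 1)) /
    (algebraMap F K (A.val 1 0) * γ + algebraMap F K (A.val 1 1))

lemma mobiusPt_one (γ : K) : mobiusPt (1 : GL (Fin 2) F) γ = γ := by
  have h00 : ((1 : GL (Fin 2) F).val 0 0) = 1 := Matrix.one_apply_eq 0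
  have h01 : ((1 : GL (Fin 2) F).val 0 1) = 0 := Matrix.one_apply_ne (by decide)
  have h10 : ((1 : GL (Fin 2) F).val 1 0) = 0 := Matrix.one_apply_ne (by decide)
  have h11 : ((1 : GL (Fin 2) F).val 1 1) = 1 := Matrix.one_apply_eq 1
  unfold mobiusPt
  rw [h00, h01, h10, h11]
  simp

lemma mobiusPt_central {S : GL (Fin 2) F} {z : F}
    (hz : S.val = z • (1 : Matrix (Fin 2) (Fin 2) F)) (γ : K) : mobiusPt S γ = γ := by
  have hzne : z ≠ 0 := central_scalar_ne_zero hz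
  have h00 : S.val 0 0 = z := by rw [hz]; simp [Matrix.one_apply]
  have h01 : S.val 0 1 = 0 := by rw [hz]; simp [Matrix.one_apply]
  have h10 : S.val 1 0 = 0 := by rw [hz]; simp [Matrix.one_apply]
  have h11 : S.val 1 1 = z := by rw [hz]; simp [Matrix.one_apply]
  have hzK : algebraMap F K z ≠ 0 := by simpa using hzne
  unfold mobiusPt
  rw [h00, h01, h10, h11]
  simp only [map_zero, mul_zero, zero_mul, add_zero, zero_add]
  field_simp

lemma mobiusPt_comp (A B : GL (Fin 2) F) {x : K}
    (h2 : algebraMap F K (B.val 1 0) * x + algebraMap F K (B.val 1 1) ≠ 0)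
    (h3 : algebraMap F K ((A * B).val 1 0) * x + algebraMap F K ((A * B).val 1 1) ≠ 0) :
    mobiusPt A (mobiusPt B x) = mobiusPt (A * B) x := by
  set φ := algebraMap F K with hφ
  set num₂ : K := φ (B.val 0 0) * x + φ (B.val 0 1) with hnum2
  set den₂ : K := φ (B.val 1 0) * x + φ (B.val 1 1) with hden2
  set δ : K := num₂ / den₂ with hδ
  have hAB : (A * B).val = A.val * B.val := rfl
  have e00 : (A * B).val 0 0 = A.val 0 0 * B.val 0 0 + A.val 0 1 * B.val 1 0 := by
    rw [hAB, Matrix.mul_apply, Fin.sum_univ_two]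
  have e01 : (A * B).val 0 1 = A.val 0 0 * B.val 0 1 + A.val 0 1 * B.val 1 1 := by
    rw [hAB, Matrix.mul_apply, Fin.sum_univ_two]
  have e10 : (A * B).val 1 0 = A.val 1 0 * B.val 0 0 + A.val 1 1 * B.val 1 0 := by
    rw [hAB, Matrix.mul_apply, Fin.sum_univ_two]
  have e11 : (A * B).val 1 1 = A.val 1 0 * B.val 0 1 + A.val 1 1 * B.val 1 1 := by
    rw [hAB, Matrix.mul_apply, Fin.sum_univ_two]
  have hkey : (φ (A.val 1 0) * δ + φ (A.val 1 1)) * den₂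
      = φ ((A * B).val 1 0) * x + φ ((A * B).val 1 1) := by
    rw [e10, e11, hδ, hnum2, hden2, map_add, map_add, map_mul, map_mul, map_mul, map_mul]
    have h2' : φ (B.val 1 0) * x + φ (B.val 1 1) ≠ 0 := h2
    rw [mul_div_assoc', div_add' _ _ _ h2', div_mul_cancel₀ _ h2']
    ring
  have hnum : (φ (A.val 0 0) * δ + φ (A.val 0 1)) * den₂
      = φ ((A * B).val 0 0) * x + φ ((A * B).val 0 1) := by
    rw [e00, e01, hδ, hnum2, hden2, map_add, map_add, map_mul, map_mul, map_mul, map_mul]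
    have h2' : φ (B.val 1 0) * x + φ (B.val 1 1) ≠ 0 := h2
    rw [mul_div_assoc', div_add' _ _ _ h2', div_mul_cancel₀ _ h2']
    ring
  have hinner : φ (A.val 1 0) * δ + φ (A.val 1 1) ≠ 0 := by
    intro h0
    exact h3 (by rw [← hkey, h0, zero_mul])
  show (φ (A.val 0 0) * δ + φ (A.val 0 1)) / (φ (A.val 1 0) * δ + φ (A.val 1 1))
      = (φ ((A * B).val 0 0) * x + φ ((A * B).val 0 1)) /
        (φ ((A * B).val 1 0) * x + φ ((A * B).val 1 1))
  rw [div_eq_div_iff hinner h3]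
  have hcross : ((φ (A.val 0 0) * δ + φ (A.val 0 1)) *
        (φ ((A * B).val 1 0) * x + φ ((A * B).val 1 1))) * den₂
      = ((φ ((A * B).val 0 0) * x + φ ((A * B).val 0 1)) *
        (φ (A.val 1 0) * δ + φ (A.val 1 1))) * den₂ := by
    linear_combination (φ ((A * B).val 1 0) * x + φ ((A * B).val 1 1)) * hnum
      - (φ ((A * B).val 0 0) * x + φ ((A * B).val 0 1)) * hkey
  exact mul_right_cancel₀ h2 hcross

lemma mobiusPt_injOn (B : GL (Fin 2) F) {γ₁ γ₂ : K}
    (h1 : algebraMap F K (B.val 1 0) * γ₁ + algebraMap F K (B.val 1 1) ≠ 0)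
    (h2 : algebraMap F K (B.val 1 0) * γ₂ + algebraMap F K (B.val 1 1) ≠ 0)
    (h : mobiusPt B γ₁ = mobiusPt B γ₂) : γ₁ = γ₂ := by
  set φ := algebraMap F K with hφ
  have hdet : φ (B.val 0 0) * φ (B.val 1 1) - φ (B.val 0 1) * φ (B.val 1 0) ≠ 0 := by
    have := GL2.det_ne B
    intro h0
    apply this
    have h0' : φ (B.val 0 0 * B.val 1 1 - B.val 0 1 * B.val 1 0) = 0 := by
      rw [map_sub, map_mul, map_mul]; exact h0
    exact (_root_.map_eq_zero φ).mp h0' 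
  unfold mobiusPt at h
  rw [div_eq_div_iff h1 h2] at h
  have hz : (γ₁ - γ₂) * (φ (B.val 0 0) * φ (B.val 1 1) - φ (B.val 0 1) * φ (B.val 1 0)) = 0 := by
    linear_combination h
  rcases mul_eq_zero.mp hz with h0 | h0
  · exact sub_eq_zero.mp h0
  · exact absurd h0 hdet

lemma mobiusPt_root {f : F[X]} (hm : f.Monic) (hf : Irreducible f)
    (hdeg : 2 ≤ f.natDegree) {B : GL (Fin 2) F} (hfix : mobiusStar B f = f)
    {γ : K} (hγ : aeval γ f = 0) : aeval (mobiusPt B γ) f = 0 := by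
  have hne := mobiusSubst_ne_zero hm hf hdeg B
  have hlc : (mobiusSubst B f).leadingCoeff ≠ 0 := leadingCoeff_ne_zero.mpr hne
  have hsubst : mobiusSubst B f = C (mobiusSubst B f).leadingCoeff * f := by
    conv_lhs => rw [show mobiusSubst B f
      = C (mobiusSubst B f).leadingCoeff * (C ((mobiusSubst B f).leadingCoeff)⁻¹
        * mobiusSubst B f) by rw [← mul_assoc, ← C_mul, mul_inv_cancel₀ hlc]; simp]
    rw [show C ((mobiusSubst B f).leadingCoeff)⁻¹ * mobiusSubst B f = mobiusStar B f from rfl,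
      hfix]
  have hden : algebraMap F K (B.val 1 0) * γ + algebraMap F K (B.val 1 1) ≠ 0 :=
    root_not_pole hf hdeg hγ (GL2.row1_ne B)
  have h0 : aeval γ (mobiusSubst B f) = 0 := by
    rw [hsubst, map_mul, aeval_C, hγ, mul_zero]
  rw [aeval_mobiusSubst_eq B f γ hden] at h0
  exact (mul_eq_zero.mp h0).resolve_left (pow_ne_zero _ hden)

end MobiusPt
section Fixed
variable {F : Type*} [Field F] [Finite F]

lemma mk_eq_one_of_mobiusStar_fixed {G : Subgroup (PGL2 F)} {k : ℕ} (hk : k.Prime)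
    (hG : Nat.card G = k) {n : ℕ} (hn : 2 < n) (hdvd : ¬ k ∣ n)
    {f : F[X]} (hm : f.Monic) (hf : Irreducible f) (hfdeg : f.natDegree = n)
    {B : GL (Fin 2) F} (hmem : PGL2.mk B ∈ G) (hfix : mobiusStar B f = f) :
    PGL2.mk B = 1 := by
  classical
  by_contra hB1
  have hdeg2 : 2 ≤ f.natDegree := by omega
  set K := AlgebraicClosure F with hK
  have hsep : f.Separable := PerfectField.separable_of_irreducible hf
  have hcard : Fintype.card (f.rootSet K) = n := by
    rw [Polynomial.card_rootSet_eq_natDegree hsep (IsAlgClosed.splits _), hfdeg]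
  have hroot : ∀ γ : K, γ ∈ f.rootSet K → aeval γ f = 0 := fun γ hγ =>
    (Polynomial.mem_rootSet.mp hγ).2
  have hmu : ∀ γ : f.rootSet K, mobiusPt B (γ : K) ∈ f.rootSet K := by
    intro γ
    rw [Polynomial.mem_rootSet]
    exact ⟨hf.ne_zero, mobiusPt_root hm hf hdeg2 hfix (hroot _ γ.2)⟩
  set μ : f.rootSet K → f.rootSet K := fun γ => ⟨mobiusPt B (γ : K), hmu γ⟩ with hμdef
  have hinj : Function.Injective μ := by
    intro γ₁ γ₂ h
    have h1 := root_not_pole hf hdeg2 (hroot _ γ₁.2) (GL2.row1_ne B)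
    have h2 := root_not_pole hf hdeg2 (hroot _ γ₂.2) (GL2.row1_ne B)
    have hvv := congrArg Subtype.val h
    exact Subtype.ext (mobiusPt_injOn B h1 h2 hvv)
  have hbij := Finite.injective_iff_bijective.mp hinj
  set σ : Equiv.Perm (f.rootSet K) := Equiv.ofBijective μ hbij with hσdef
  have hσapp : ∀ γ : f.rootSet K, ((σ γ : f.rootSet K) : K) = mobiusPt B (γ : K) :=
    fun γ => rfl
  have hiter : ∀ (j : ℕ) (γ : f.rootSet K), ((σ ^ j) γ : K) = mobiusPt (B ^ j) (γ : K) := by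
    intro j
    induction j with
    | zero => intro γ; rw [pow_zero, pow_zero]; simp [mobiusPt_one]
    | succ j ih =>
      intro γ
      rw [pow_succ, Equiv.Perm.mul_apply, ih (σ γ), hσapp γ]
      have h2 := root_not_pole hf hdeg2 (hroot _ γ.2) (GL2.row1_ne B)
      have h3 := root_not_pole hf hdeg2 (hroot _ γ.2) (GL2.row1_ne (B ^ j * B))
      rw [mobiusPt_comp (B ^ j) B h2 h3, ← pow_succ]
  have hBk : PGL2.mk (B ^ k) = 1 := by
    have hg : (⟨PGL2.mk B, hmem⟩ : G) ^ k = 1 := by rw [← hG]; exact pow_card_eq_one'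
    have hgv := congrArg Subtype.val hg
    have : (PGL2.mk B) ^ k = 1 := by simpa using hgv
    rw [show PGL2.mk (B ^ k) = (PGL2.mk B) ^ k from map_pow (QuotientGroup.mk' _) B k]
    exact this
  obtain ⟨z, hz⟩ := mem_center_GL2_iff.mp ((QuotientGroup.eq_one_iff _).mp hBk)
  have hσk : σ ^ k = 1 := by
    apply Equiv.ext
    intro γ
    apply Subtype.ext
    rw [hiter k γ]
    simpa using mobiusPt_central hz (γ : K)
  have hord : orderOf σ ∣ k := orderOf_dvd_of_pow_eq_one hσk
  have hpg : IsPGroup k (Subgroup.zpowers σ) := by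
    rcases (Nat.Prime.eq_one_or_self_of_dvd hk _ hord) with h | h
    · exact IsPGroup.of_card (n := 0) (by rw [Nat.card_zpowers, h, pow_zero])
    · exact IsPGroup.of_card (n := 1) (by rw [Nat.card_zpowers, h, pow_one])
  haveI : Fact k.Prime := ⟨hk⟩
  have hmod := hpg.card_modEq_card_fixedPoints (f.rootSet K)
  have hNcard : Nat.card (f.rootSet K) = n := by rw [Nat.card_eq_fintype_card, hcard]
  have hfixne : Nat.card (MulAction.fixedPoints (Subgroup.zpowers σ) (f.rootSet K)) ≠ 0 := by
    intro h0
    rw [hNcard, h0] at hmod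
    exact hdvd (Nat.modEq_zero_iff_dvd.mp hmod)
  have hne : Nonempty (MulAction.fixedPoints (Subgroup.zpowers σ) (f.rootSet K)) :=
    (Nat.card_ne_zero.mp hfixne).1
  obtain ⟨⟨γ, hγfix⟩⟩ := hne
  have hσγ : σ γ = γ := by
    have := (MulAction.mem_fixedPoints.mp hγfix) ⟨σ, Subgroup.mem_zpowers σ⟩
    simpa [Subgroup.smul_def, Equiv.Perm.smul_def] using this
  have hval : mobiusPt B (γ : K) = (γ : K) := by
    rw [← hσapp γ, hσγ]
  have hden := root_not_pole hf hdeg2 (hroot _ γ.2) (GL2.row1_ne B)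
  set φ := algebraMap F K with hφ
  have hcross : φ (B.val 0 0) * (γ : K) + φ (B.val 0 1)
      = (γ : K) * (φ (B.val 1 0) * (γ : K) + φ (B.val 1 1)) := by
    have := hval
    unfold mobiusPt at this
    rw [div_eq_iff hden] at this
    exact this
  have hquad : aeval (γ : K)
      (C (B.val 1 0) * X ^ 2 + C (B.val 1 1 - B.val 0 0) * X + C (-(B.val 0 1))) = 0 := by
    simp only [map_add, map_mul, aeval_C, aeval_X, map_pow, map_sub, map_neg]
    linear_combination -hcross
  have hpne : (C (B.val 1 0) * X ^ 2 + C (B.val 1 1 - B.val 0 0) * X + C (-(B.val 0 1)))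
      ≠ 0 := by
    intro h0
    have hc : B.val 1 0 = 0 := by
      have := congrArg (fun p => coeff p 2) h0
      simpa [coeff_X_pow, coeff_C] using this
    have hda : B.val 1 1 - B.val 0 0 = 0 := by
      have := congrArg (fun p => coeff p 1) h0
      simpa [coeff_X_pow, coeff_C] using this
    have hb : B.val 0 1 = 0 := by
      have := congrArg (fun p => coeff p 0) h0
      simpa [coeff_X_pow, coeff_C] using this
    apply hB1
    rw [QuotientGroup.eq_one_iff]
    apply mem_center_GL2_iff.mpr
    refine ⟨B.val 0 0, ?_⟩
    ext i j
    fin_cases i <;> fin_cases j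
    · simp [Matrix.one_apply]
    · simpa [Matrix.one_apply] using hb
    · simpa [Matrix.one_apply] using hc
    · simp [Matrix.one_apply, sub_eq_zero.mp hda]
  have hminγ : f = minpoly F (γ : K) :=
    minpoly.eq_of_irreducible_of_monic hf (hroot _ γ.2) hm
  have hdvd2 : f ∣ (C (B.val 1 0) * X ^ 2 + C (B.val 1 1 - B.val 0 0) * X + C (-(B.val 0 1))) := by
    rw [hminγ]
    exact minpoly.dvd F _ hquad
  have hle := natDegree_le_of_dvd hdvd2 hpne
  have h2 := natDegree_quadratic_le (a := B.val 1 0) (b := B.val 1 1 - B.val 0 0)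
    (c := -(B.val 0 1))
  omega

end Fixed
section Orbit
variable {F : Type*} [Field F] [Finite F]

lemma mobiusStar_eq_iff {G : Subgroup (PGL2 F)} {k n : ℕ} (hk : k.Prime)
    (hG : Nat.card G = k) (hn : 2 < n) (hdvd : ¬ k ∣ n) {f : F[X]}
    (hm : f.Monic) (hf : Irreducible f) (hfdeg : f.natDegree = n)
    {A B : GL (Fin 2) F} (hA : PGL2.mk A ∈ G) (hB : PGL2.mk B ∈ G) :
    mobiusStar A f = mobiusStar B f ↔ PGL2.mk A = PGL2.mk B := by
  have hd2 : 2 ≤ f.natDegree := by omega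
  constructor
  · intro h
    have hfeq : mobiusStar (B * A⁻¹) f = f := by
      calc mobiusStar (B * A⁻¹) f = mobiusStar A⁻¹ (mobiusStar B f) :=
            (mobiusStar_comp B A⁻¹ hm hf hd2).symm
        _ = mobiusStar A⁻¹ (mobiusStar A f) := by rw [h]
        _ = mobiusStar (A * A⁻¹) f := mobiusStar_comp A A⁻¹ hm hf hd2
        _ = f := by rw [mul_inv_cancel]; exact mobiusStar_one hm
    have hmemBA : PGL2.mk (B * A⁻¹) ∈ G := by
      rw [show PGL2.mk (B * A⁻¹) = PGL2.mk B * (PGL2.mk A)⁻¹ from rfl]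
      exact mul_mem hB (inv_mem hA)
    have h1 := mk_eq_one_of_mobiusStar_fixed hk hG hn hdvd hm hf hfdeg hmemBA hfeq
    have h2 : PGL2.mk B * (PGL2.mk A)⁻¹ = 1 := by
      rw [show PGL2.mk B * (PGL2.mk A)⁻¹ = PGL2.mk (B * A⁻¹) from rfl]
      exact h1
    exact (mul_inv_eq_one.mp h2).symm
  · intro h
    exact mobiusStar_eq_of_mk_eq h f

lemma polyOrbit_ncard {G : Subgroup (PGL2 F)} {k n : ℕ} (hk : k.Prime)
    (hG : Nat.card G = k) (hn : 2 < n) (hdvd : ¬ k ∣ n) {f : F[X]}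
    (hm : f.Monic) (hf : Irreducible f) (hfdeg : f.natDegree = n) :
    (polyOrbit G f).ncard = k := by
  classical
  set c : G → F[X] := fun g => mobiusStar ((g.val).out) f with hc
  have hout : ∀ g : G, PGL2.mk ((g.val).out) = g.val := fun g =>
    QuotientGroup.out_eq' g.val
  have houtmem : ∀ g : G, PGL2.mk ((g.val).out) ∈ G := fun g => by
    rw [hout]; exact g.2
  have hrange : polyOrbit G f = Set.range c := by
    ext t
    constructor
    · rintro ⟨A, hA, rfl⟩
      exact ⟨⟨PGL2.mk A, hA⟩, mobiusStar_eq_of_mk_eq (hout ⟨PGL2.mk A, hA⟩) f⟩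
    · rintro ⟨g, rfl⟩
      exact ⟨(g.val).out, houtmem g, rfl⟩
  have hcinj : Function.Injective c := by
    intro g₁ g₂ h
    have h1 := (mobiusStar_eq_iff hk hG hn hdvd hm hf hfdeg (houtmem g₁) (houtmem g₂)).mp h
    apply Subtype.ext
    rw [← hout g₁, ← hout g₂, h1]
  rw [hrange, ← Nat.card_coe_set_eq, Nat.card_range_of_injective hcinj, hG]

end Orbit

theorem orbit_size_eq_card_and_omega' (F : Type*) [Field F] [Fintype F]
    (G : Subgroup (PGL2 F)) (k : ℕ) (hk : k.Prime) (hG : Nat.card G = k)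
    (n : ℕ) (hn : 2 < n) (hdvd : ¬ k ∣ n) :
    (∀ f : F[X], f.Monic → Irreducible f → f.natDegree = n →
        (polyOrbit G f).ncard = k)
      ∧ omegaG G n k * k
          = {f : F[X] | f.Monic ∧ Irreducible f ∧ f.natDegree = n}.ncard := by
  classical
  have part1 : ∀ f : F[X], f.Monic → Irreducible f → f.natDegree = n →
      (polyOrbit G f).ncard = k :=
    fun f hm hf hd => polyOrbit_ncard hk hG hn hdvd hm hf hd
  refine ⟨part1, ?_⟩
  set S : Set F[X] := {f | f.Monic ∧ Irreducible f ∧ f.natDegree = n} with hSdef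
  have horbS : ∀ {r : F[X]}, r ∈ S → ∀ A : GL (Fin 2) F, mobiusStar A r ∈ S := by
    rintro r ⟨h1, h2, h3⟩ A
    have hd2 : 2 ≤ r.natDegree := by omega
    exact ⟨mobiusStar_monic h1 h2 hd2 A, mobiusStar_irreducible h1 h2 hd2 A,
      by rw [natDegree_mobiusStar h1 h2 hd2 A, h3]⟩
  have hmk1 : PGL2.mk (1 : GL (Fin 2) F) ∈ G := by
    rw [show PGL2.mk (1 : GL (Fin 2) F) = 1 from rfl]
    exact one_mem G
  have hself : ∀ {r : F[X]}, r.Monic → r ∈ polyOrbit G r := fun {r} hm =>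
    ⟨1, hmk1, (mobiusStar_one hm).symm⟩
  have horbeq : ∀ {r : F[X]}, r ∈ S → ∀ {A : GL (Fin 2) F}, PGL2.mk A ∈ G →
      polyOrbit G (mobiusStar A r) = polyOrbit G r := by
    rintro r ⟨h1, h2, h3⟩ A hA
    have hd2 : 2 ≤ r.natDegree := by omega
    ext s
    constructor
    · rintro ⟨B, hB, rfl⟩
      refine ⟨A * B, ?_, ?_⟩
      · exact mul_mem hA hB
      · rw [mobiusStar_comp A B h1 h2 hd2]
    · rintro ⟨B, hB, rfl⟩
      refine ⟨A⁻¹ * B, ?_, ?_⟩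
      · rw [show PGL2.mk (A⁻¹ * B) = (PGL2.mk A)⁻¹ * PGL2.mk B from rfl]
        exact mul_mem (inv_mem hA) hB
      · rw [mobiusStar_comp A (A⁻¹ * B) h1 h2 hd2, show A * (A⁻¹ * B) = B by group]
  have hSfin : S.Finite := by
    apply Set.Finite.of_finite_image (f := fun p : F[X] => fun i : Fin (n + 1) => p.coeff i)
    · exact Set.toFinite _
    · intro p hp q' hq' h
      apply Polynomial.ext
      intro i
      by_cases hi : i ≤ n
      · have := congrFun h ⟨i, by omega⟩
        simpa using this
      · rw [coeff_eq_zero_of_natDegree_lt (by rw [hp.2.2]; omega),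
          coeff_eq_zero_of_natDegree_lt (by rw [hq'.2.2]; omega)]
  set Sf := hSfin.toFinset with hSf
  set q : F[X] → Set F[X] := fun r => polyOrbit G r with hq
  set t := Sf.image q with htdef
  have hfib : ∀ O ∈ t, (Sf.filter (fun g => q g = O)).card = k := by
    intro O hO
    obtain ⟨r, hrSf, rfl⟩ := Finset.mem_image.mp hO
    have hrS : r ∈ S := hSfin.mem_toFinset.mp hrSf
    have hset : (↑(Sf.filter fun g => q g = q r) : Set F[X]) = polyOrbit G r := by
      ext g
      simp only [Finset.coe_filter, Set.mem_setOf_eq, Finset.mem_coe, hSf, hSfin.mem_toFinset]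
      constructor
      · rintro ⟨hgS, hqe⟩
        have : g ∈ q g := hself hgS.1
        rwa [hqe] at this
      · intro hg
        obtain ⟨A, hA, rfl⟩ := hg
        exact ⟨horbS hrS A, horbeq hrS hA⟩
    have hcards : (Sf.filter fun g => q g = q r).card = (polyOrbit G r).ncard := by
      rw [← hset, Set.ncard_coe_finset]
    rw [hcards]
    exact part1 r hrS.1 hrS.2.1 hrS.2.2
  have hcount : Sf.card = t.card * k := by
    rw [Finset.card_eq_sum_card_fiberwise (f := q) (t := t)
      (fun x hx => Finset.mem_image_of_mem q hx)]
    rw [Finset.sum_congr rfl hfib, Finset.sum_const, smul_eq_mul]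
  have homega : omegaG G n k = t.card := by
    unfold omegaG
    have hseteq : {O : Set F[X] | ∃ r : F[X], memNR G r ∧ Irreducible r ∧ r.natDegree = n ∧
        O = polyOrbit G r ∧ O.ncard = k} = (↑t : Set (Set F[X])) := by
      ext O
      rw [htdef]
      simp only [Set.mem_setOf_eq, Finset.coe_image, Set.mem_image, Finset.mem_coe,
        hSf, hSfin.mem_toFinset]
      constructor
      · rintro ⟨r, hNR, hirr, hdeg, rfl, hcard⟩
        exact ⟨r, ⟨hNR.1, hirr, hdeg⟩, rfl⟩
      · rintro ⟨r, hrS, rfl⟩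
        refine ⟨r, ⟨hrS.1, fun A hA hc => ?_⟩, hrS.2.1, hrS.2.2, rfl,
          part1 r hrS.1 hrS.2.1 hrS.2.2⟩
        exact no_root_of_irreducible hrS.2.1 (by rw [hrS.2.2]; omega) _
    rw [hseteq, Set.ncard_coe_finset]
  rw [homega, ← hcount, Set.ncard_eq_toFinset_card S hSfin]

theorem orbit_size_eq_card_and_omega (F : Type*) [Field F] [Fintype F]
    (G : Subgroup (PGL2 F)) (k : ℕ) (hk : k.Prime) (hG : Nat.card G = k)
    (hcyc : IsCyclic ↥G) (n : ℕ) (hn : 2 < n) (hdvd : ¬ k ∣ n) :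
    (∀ f : F[X], f.Monic → Irreducible f → f.natDegree = n →
        (polyOrbit G f).ncard = k)
      ∧ omegaG G n k * k
          = {f : F[X] | f.Monic ∧ Irreducible f ∧ f.natDegree = n}.ncard := by
  exact orbit_size_eq_card_and_omega' F G k hk hG n hn hdvd
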